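/- Adhesive states: Let L, ρ, μ > 0 and let Φ satisfy assumption (A1) with constant κ. There exists ε₀ > 0, depending only on L, μ and κ, with the following property. Suppose u : [0,∞)×[0,L] → ℝ is continuous, ∂_t u and ∂²ₓu exist and are continuous on [0,∞)×[0,L], u(0,·) = u₀ with sup_{x∈[0,L]} |u₀(x)| < 1, the energy dissipation inequality E[u](t) ≤ E[u](0) holds for every t ≥ 0, and E[u](0) < ε₀. Then sup_{(t,x)∈[0,∞)×[0,L]} |u(t,x)| < 1, i.e. the beam never detaches. -/

import Mathlib

open MeasureTheory Filter Set intervalIntegral Real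

/-- Assumption (A1) on the adhesive potential `Φ` with constant `κ`. -/
structure AdhesivePotential (Φ : ℝ → ℝ) (κ : ℝ) : Prop where
  continuous : Continuous Φ
  smooth : ContDiffOn ℝ 2 Φ ({1, -1} : Set ℝ)ᶜ
  nonneg : ∀ s, 0 ≤ Φ s
  const_left : ∀ s ≤ (-1 : ℝ), Φ s = Φ (-1)
  const_right : ∀ s ≥ (1 : ℝ), Φ s = Φ 1
  convexOn : ConvexOn ℝ (Set.Icc (-1 : ℝ) 1) Φ
  strictAntiOn : StrictAntiOn Φ (Set.Icc (-1 : ℝ) 0)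
  strictMonoOn : StrictMonoOn Φ (Set.Icc (0 : ℝ) 1)
  kappa_pos : 0 < κ
  quad_lower : ∀ s ∈ Set.Icc (-1 : ℝ) 1, κ * s ^ 2 ≤ Φ s

/-- The subdifferential of the (discontinuous) adhesive force `Φ'`:
`∂Φ'(s) = {Φ'(s)}` if `|s| < 1`, `{0}` if `|s| > 1`, `[0, Φ'(1⁻)]` if `s = 1` and
`[Φ'(-1⁺), 0]` if `s = -1`.  Since `Φ` is convex on `[-1,1]`, its derivative is monotone
there, so the one-sided limits `Φ'(1⁻)` and `Φ'(-1⁺)` coincide with the supremum and the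
infimum of `Φ'` over `(-1,1)`, respectively. -/
noncomputable def subdiffForce (Φ : ℝ → ℝ) (s : ℝ) : Set ℝ :=
  if |s| < 1 then {deriv Φ s}
  else if s = 1 then Set.Icc 0 (sSup (deriv Φ '' Set.Ioo (-1 : ℝ) 1))
  else if s = -1 then Set.Icc (sInf (deriv Φ '' Set.Ioo (-1 : ℝ) 1)) 0
  else {0}

/-- Core interpolation estimate: sup bound from L² bounds on `v` and `v''`. -/
lemma slice_bound (L κ μ ε : ℝ) (hL : 0 < L) (hκ : 0 < κ) (hμ : 0 < μ) (hε : 0 < ε)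
    (v g h : ℝ → ℝ)
    (hv : ∀ x ∈ Icc 0 L, HasDerivAt v (g x) x)
    (hg : ∀ x ∈ Icc 0 L, HasDerivAt g (h x) x)
    (hhc : ContinuousOn h (Icc 0 L))
    (hv2 : (∫ x in (0:ℝ)..L, (v x) ^ 2) ≤ ε / κ)
    (hh2 : (∫ x in (0:ℝ)..L, (h x) ^ 2) ≤ 2 * ε / μ) :
    ∀ x ∈ Icc 0 L, |v x| ≤
      (10 / Real.sqrt (L * κ) + L * (L + 2 / μ) / 2) * Real.sqrt ε := by
  have hvc : ContinuousOn v (Icc 0 L) := fun x hx =>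
    (hv x hx).continuousAt.continuousWithinAt
  have hgc : ContinuousOn g (Icc 0 L) := fun x hx =>
    (hg x hx).continuousAt.continuousWithinAt
  have hL0 : (0:ℝ) ≤ L := hL.le
  have huIcc : uIcc (0:ℝ) L = Icc 0 L := uIcc_of_le hL0
  -- integrability facts
  have hvi : IntervalIntegrable (fun x => (v x)^2) volume 0 L :=
    ContinuousOn.intervalIntegrable (by rw [huIcc]; exact hvc.pow 2)
  have hhi2 : IntervalIntegrable (fun x => (h x)^2) volume 0 L :=
    ContinuousOn.intervalIntegrable (by rw [huIcc]; exact hhc.pow 2)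
  have hhabs : IntervalIntegrable (fun x => |h x|) volume 0 L :=
    ContinuousOn.intervalIntegrable (by rw [huIcc]; exact hhc.abs)
  have hhii : IntervalIntegrable h volume 0 L :=
    ContinuousOn.intervalIntegrable (by rw [huIcc]; exact hhc)
  have hgi : IntervalIntegrable g volume 0 L :=
    ContinuousOn.intervalIntegrable (by rw [huIcc]; exact hgc)
  have hv2nonneg : (0:ℝ) ≤ ∫ x in (0:ℝ)..L, (v x)^2 :=
    intervalIntegral.integral_nonneg hL0 (fun x _ => sq_nonneg _)
  -- find a small point of |v| on [0, L/4]
  have find_small : ∀ a b : ℝ, 0 ≤ a → a < b → b ≤ L →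
      ∃ p ∈ Icc a b, (v p)^2 * (b - a) ≤ ∫ x in (0:ℝ)..L, (v x)^2 := by
    intro a b ha hab hbL
    have hsub : Icc a b ⊆ Icc 0 L := Icc_subset_Icc ha hbL
    obtain ⟨p, hp, hpmin'⟩ := (isCompact_Icc).exists_isMinOn (nonempty_Icc.2 hab.le)
      ((hvc.mono hsub).pow 2)
    have hpmin : ∀ y ∈ Icc a b, (v p)^2 ≤ (v y)^2 := fun y hy => hpmin' hy
    refine ⟨p, hp, ?_⟩
    have h1 : (v p)^2 * (b - a) = ∫ x in a..b, (v p)^2 := by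
      rw [intervalIntegral.integral_const, smul_eq_mul]; ring
    have h2 : (∫ x in a..b, (v p)^2) ≤ ∫ x in a..b, (v x)^2 := by
      apply intervalIntegral.integral_mono_on hab.le intervalIntegrable_const
        (hvi.mono_set (by rw [huIcc, uIcc_of_le hab.le]; exact hsub))
      exact fun x hx => hpmin x hx
    have h3 : (∫ x in a..b, (v x)^2) ≤ ∫ x in (0:ℝ)..L, (v x)^2 :=
      intervalIntegral.integral_mono_interval ha hab.le hbL
        (Filter.Eventually.of_forall fun x => sq_nonneg _) hvi
    linarith
  have hL4 : 0 < L/4 := by linarith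
  obtain ⟨p, hp, hpv⟩ := find_small 0 (L/4) le_rfl hL4 (by linarith)
  obtain ⟨q, hq, hqv⟩ := find_small (3*L/4) L (by linarith) (by linarith) le_rfl
  have hpIcc : p ∈ Icc (0:ℝ) L := Icc_subset_Icc le_rfl (by linarith) hp
  have hqIcc : q ∈ Icc (0:ℝ) L := Icc_subset_Icc (by linarith) le_rfl hq
  have hpq : p < q := lt_of_le_of_lt hp.2 (lt_of_lt_of_le (by linarith) hq.1)
  have hqp2 : L/2 ≤ q - p := by
    have := hp.2; have := hq.1; linarith
  -- bounds on |v p|, |v q|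
  have hsqrtε : 0 < Real.sqrt ε := Real.sqrt_pos.2 hε
  have hLκ : 0 < Real.sqrt (L * κ) := Real.sqrt_pos.2 (by positivity)
  set A : ℝ := 2 * Real.sqrt ε / Real.sqrt (L * κ) with hA
  have hA0 : 0 ≤ A := by positivity
  have hbound : ∀ r : ℝ, r ∈ Icc (0:ℝ) L → (v r)^2 * (L/4) ≤ ∫ x in (0:ℝ)..L, (v x)^2 →
      |v r| ≤ A := by
    intro r _ hr
    have h1 : (v r)^2 ≤ A^2 := by
      have h2 : (v r)^2 * (L/4) ≤ ε / κ := le_trans hr hv2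
      have h2' : (v r)^2 * (L/4) * κ ≤ ε := (le_div_iff₀ hκ).mp h2
      have hA2 : A^2 = 4 * ε / (L * κ) := by
        rw [hA, div_pow, mul_pow, Real.sq_sqrt hε.le,
          Real.sq_sqrt (by positivity : (0:ℝ) ≤ L * κ)]
        ring
      rw [hA2, le_div_iff₀ (by positivity : (0:ℝ) < L * κ)]
      nlinarith
    calc |v r| = Real.sqrt ((v r)^2) := (Real.sqrt_sq_eq_abs _).symm
      _ ≤ Real.sqrt (A^2) := Real.sqrt_le_sqrt h1
      _ = A := Real.sqrt_sq hA0
  rw [show L/4 - (0:ℝ) = L/4 by norm_num] at hpv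
  rw [show L - 3*L/4 = L/4 by ring] at hqv
  have hvpA : |v p| ≤ A := hbound p hpIcc hpv
  have hvqA : |v q| ≤ A := hbound q hqIcc hqv
  -- mean value theorem on [p,q]
  have hPQsub : Icc p q ⊆ Icc 0 L := Icc_subset_Icc hpIcc.1 hqIcc.2
  obtain ⟨ξ, hξ, hξeq⟩ := exists_hasDerivAt_eq_slope v g hpq (hvc.mono hPQsub)
    (fun x hx => hv x (hPQsub (Ioo_subset_Icc_self hx)))
  have hξIcc : ξ ∈ Icc 0 L := hPQsub (Ioo_subset_Icc_self hξ)
  have hgξ : |g ξ| ≤ 4 * A / L := by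
    rw [hξeq, abs_div, abs_of_pos (by linarith : (0:ℝ) < q - p),
      div_le_div_iff₀ (by linarith) hL]
    have h1 : |v q - v p| ≤ 2*A := (abs_sub _ _).trans (by linarith)
    nlinarith [abs_nonneg (v q - v p)]
  -- bound on ∫ |h|
  set s : ℝ := Real.sqrt ε with hs
  set B : ℝ := s * (L + 2/μ) / 2 with hB
  have hB0 : 0 ≤ B := by positivity
  have hinth : (∫ x in (0:ℝ)..L, |h x|) ≤ B := by
    have key : (h : ℝ) → ((h)^2 / s) * s = (h)^2 := fun h => div_mul_cancel₀ _ hsqrtε.ne'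
    have hpt : ∀ x ∈ Icc (0:ℝ) L, |h x| ≤ (s + (h x)^2 / s)/2 := by
      intro x _
      nlinarith [sq_nonneg (s - |h x|), sq_abs (h x), key (h x), hsqrtε]
    have h1 : (∫ x in (0:ℝ)..L, |h x|) ≤ ∫ x in (0:ℝ)..L, (s + (h x)^2/s)/2 := by
      apply intervalIntegral.integral_mono_on hL0 hhabs
      · exact (intervalIntegrable_const.add (hhi2.div_const s)).div_const 2
      · exact hpt
    have h2 : (∫ x in (0:ℝ)..L, (s + (h x)^2/s)/2)
        = (s * L + (∫ x in (0:ℝ)..L, (h x)^2)/s)/2 := by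
      rw [intervalIntegral.integral_div, intervalIntegral.integral_add
        intervalIntegrable_const (hhi2.div_const s),
        intervalIntegral.integral_const, intervalIntegral.integral_div]
      rw [smul_eq_mul]; ring
    have h3 : (∫ x in (0:ℝ)..L, (h x)^2)/s ≤ (2*ε/μ)/s :=
      by gcongr
    have h4 : (2*ε/μ)/s = 2*s/μ := by
      have hss : s * s = ε := Real.mul_self_sqrt hε.le
      field_simp
      linear_combination (-1:ℝ) * hss
    rw [hB]
    calc (∫ x in (0:ℝ)..L, |h x|) ≤ (s * L + (∫ x in (0:ℝ)..L, (h x)^2)/s)/2 :=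
          h1.trans (le_of_eq h2)
      _ ≤ (s * L + 2*s/μ)/2 := by rw [← h4]; linarith
      _ = s * (L + 2/μ) / 2 := by ring
  -- uniform bound on g
  set G : ℝ := 4*A/L + B with hG
  have hG0 : 0 ≤ G := by positivity
  have habsint : ∀ a b : ℝ, a ∈ Icc (0:ℝ) L → b ∈ Icc (0:ℝ) L → a ≤ b →
      |∫ y in a..b, h y| ≤ B := by
    intro a b ha hb hab
    calc |∫ y in a..b, h y| ≤ ∫ y in a..b, |h y| :=
          intervalIntegral.abs_integral_le_integral_abs hab
      _ ≤ ∫ y in (0:ℝ)..L, |h y| :=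
          intervalIntegral.integral_mono_interval ha.1 hab hb.2
            (Filter.Eventually.of_forall fun x => abs_nonneg _) hhabs
      _ ≤ B := hinth
  have hGg : ∀ x ∈ Icc (0:ℝ) L, |g x| ≤ G := by
    intro x hx
    have hsub : uIcc ξ x ⊆ Icc 0 L := uIcc_subset_Icc hξIcc hx
    have hftc : (∫ y in ξ..x, h y) = g x - g ξ :=
      intervalIntegral.integral_eq_sub_of_hasDerivAt
        (fun y hy => hg y (hsub hy))
        (hhii.mono_set (by rw [huIcc]; exact hsub))
    have hint : |∫ y in ξ..x, h y| ≤ B := by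
      rcases le_total ξ x with hle | hle
      · exact habsint ξ x hξIcc hx hle
      · rw [intervalIntegral.integral_symm, abs_neg]
        exact habsint x ξ hx hξIcc hle
    have : |g x| ≤ |g ξ| + |∫ y in ξ..x, h y| := by
      rw [hftc] at *
      calc |g x| = |g ξ + (g x - g ξ)| := by ring_nf
        _ ≤ |g ξ| + |g x - g ξ| := abs_add_le _ _
    rw [hG]; linarith
  -- conclude
  intro x hx
  have hsub : uIcc p x ⊆ Icc 0 L := uIcc_subset_Icc hpIcc hx
  have hftc : (∫ y in p..x, g y) = v x - v p :=
    intervalIntegral.integral_eq_sub_of_hasDerivAt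
      (fun y hy => hv y (hsub hy))
      (hgi.mono_set (by rw [huIcc]; exact hsub))
  have hintg : ∀ a b : ℝ, a ∈ Icc (0:ℝ) L → b ∈ Icc (0:ℝ) L → a ≤ b →
      |∫ y in a..b, g y| ≤ G * L := by
    intro a b ha hb hab
    calc |∫ y in a..b, g y| ≤ ∫ y in a..b, |g y| :=
          intervalIntegral.abs_integral_le_integral_abs hab
      _ ≤ ∫ y in a..b, G := by
          apply intervalIntegral.integral_mono_on hab
            (ContinuousOn.intervalIntegrable (by
              rw [uIcc_of_le hab]
              exact (hgc.mono (Icc_subset_Icc ha.1 hb.2)).abs)) intervalIntegrable_const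
          exact fun y hy => hGg y (Icc_subset_Icc ha.1 hb.2 hy)
      _ = G * (b - a) := by rw [intervalIntegral.integral_const, smul_eq_mul]; ring
      _ ≤ G * L := by
          apply mul_le_mul_of_nonneg_left _ hG0
          have := ha.1; have := hb.2; linarith
  have hIpx : |∫ y in p..x, g y| ≤ G * L := by
    rcases le_total p x with hle | hle
    · exact hintg p x hpIcc hx hle
    · rw [intervalIntegral.integral_symm, abs_neg]
      exact hintg x p hx hpIcc hle
  have hvx : |v x| ≤ A + G * L := by
    rw [hftc] at hIpx
    calc |v x| = |v p + (v x - v p)| := by ring_nf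
      _ ≤ |v p| + |v x - v p| := abs_add_le _ _
      _ ≤ A + G * L := by linarith
  have hGL : G * L = 4*A + B*L := by
    rw [hG, add_mul, div_mul_cancel₀ _ hL.ne']
  have hfinal : A + (4*A + B*L) = (10 / Real.sqrt (L * κ) + L * (L + 2 / μ) / 2) * Real.sqrt ε := by
    rw [hA, hB]; ring
  rw [hGL] at hvx
  linarith [hvx, hfinal.le]

/-- **Adhesive states.**  Let `L, ρ, μ > 0` and let `Φ` satisfy assumption (A1) with
constant `κ`.  There exists `ε₀ > 0`, depending only on `L`, `μ` and `κ`, with the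
following property: if `u` is a solution (with continuous `∂ₜu` and `∂ₓ²u` on
`[0,∞) × [0,L]`) satisfying the energy dissipation inequality `E[u](t) ≤ E[u](0)`, whose
initial datum satisfies `sup_{[0,L]} |u₀| < 1`, and whose initial energy satisfies
`E[u](0) < ε₀`, then `sup_{[0,∞) × [0,L]} |u| < 1`: the beam never detaches. -/
theorem adhesive_states
    (L μ κ : ℝ) (hL : 0 < L) (hμ : 0 < μ) (hκ : 0 < κ) :
    ∃ ε₀ > (0:ℝ),
      ∀ (ρ : ℝ), 0 < ρ →
      ∀ (Φ : ℝ → ℝ), AdhesivePotential Φ κ →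
      ∀ (u ut ux uxx : ℝ → ℝ → ℝ),
      -- u is continuous on [0,∞) × [0,L]
      ContinuousOn (fun p : ℝ × ℝ => u p.1 p.2) (Ici 0 ×ˢ Icc 0 L) →
      -- ∂ₜu exists and is continuous on [0,∞) × [0,L]
      (∀ x ∈ Icc 0 L, ∀ t ∈ Ici (0:ℝ), HasDerivAt (fun τ => u τ x) (ut t x) t) →
      ContinuousOn (fun p : ℝ × ℝ => ut p.1 p.2) (Ici 0 ×ˢ Icc 0 L) →
      -- ∂ₓ²u exists and is continuous on [0,∞) × [0,L]
      (∀ t ∈ Ici (0:ℝ), ∀ x ∈ Icc 0 L, HasDerivAt (fun y => u t y) (ux t x) x) →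
      (∀ t ∈ Ici (0:ℝ), ∀ x ∈ Icc 0 L, HasDerivAt (fun y => ux t y) (uxx t x) x) →
      ContinuousOn (fun p : ℝ × ℝ => uxx p.1 p.2) (Ici 0 ×ˢ Icc 0 L) →
      -- `sup_{[0,L]} |u(0,·)| < 1`
      (∃ m < (1:ℝ), ∀ x ∈ Icc 0 L, |u 0 x| ≤ m) →
      -- energy dissipation: E[u](t) ≤ E[u](0) for every t ≥ 0
      (∀ t ∈ Ici (0:ℝ),
        (∫ x in (0:ℝ)..L, ((ρ * (ut t x) ^ 2 + μ * (uxx t x) ^ 2) / 2 + Φ (u t x)))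
          ≤ ∫ x in (0:ℝ)..L, ((ρ * (ut 0 x) ^ 2 + μ * (uxx 0 x) ^ 2) / 2 + Φ (u 0 x))) →
      -- small initial energy: E[u](0) < ε₀
      (∫ x in (0:ℝ)..L, ((ρ * (ut 0 x) ^ 2 + μ * (uxx 0 x) ^ 2) / 2 + Φ (u 0 x))) < ε₀ →
      -- conclusion: `sup_{[0,∞) × [0,L]} |u| < 1`, the beam never detaches
      ∃ M < (1:ℝ), ∀ t ∈ Ici (0:ℝ), ∀ x ∈ Icc 0 L, |u t x| ≤ M := by
  classical
  set C : ℝ := 10 / Real.sqrt (L * κ) + L * (L + 2 / μ) / 2 with hC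
  have hC0 : 0 < C := by positivity
  refine ⟨(1 / (2 * C))^2, by positivity, ?_⟩
  intro ρ hρ Φ hΦ u ut ux uxx hu hutd hutc huxd huxxd huxxc hinit hdiss hsmall
  obtain ⟨m, hm1, hm⟩ := hinit
  set ε₀ : ℝ := (1 / (2 * C))^2 with hε₀
  have hε₀pos : 0 < ε₀ := by positivity
  set M : ℝ := max m (1/2) with hM
  have hM1 : M < 1 := max_lt hm1 (by norm_num)
  have hM12 : (1:ℝ)/2 ≤ M := le_max_right _ _
  have hkey : C * Real.sqrt ε₀ = 1/2 := by
    rw [hε₀, Real.sqrt_sq (by positivity)]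
    field_simp
  have huIcc0L : uIcc (0:ℝ) L = Icc 0 L := uIcc_of_le hL.le
  -- continuity of time-slices in x
  have sliceCont : ∀ (w : ℝ → ℝ → ℝ),
      ContinuousOn (fun p : ℝ × ℝ => w p.1 p.2) (Ici 0 ×ˢ Icc 0 L) →
      ∀ t ∈ Ici (0:ℝ), ContinuousOn (fun x => w t x) (Icc 0 L) := by
    intro w hw t ht
    have heq : (fun x => w t x) = (fun p : ℝ × ℝ => w p.1 p.2) ∘ (fun x => (t, x)) := rfl
    rw [heq]
    exact hw.comp (Continuous.continuousOn (by continuity)) (fun x hx => ⟨ht, hx⟩)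
  -- energy improvement step
  have step : ∀ t ∈ Ici (0:ℝ), (∀ x ∈ Icc 0 L, |u t x| ≤ 1) →
      ∀ x ∈ Icc 0 L, |u t x| ≤ 1/2 := by
    intro t ht hb
    have hcu := sliceCont u hu t ht
    have hcut := sliceCont ut hutc t ht
    have hcuxx := sliceCont uxx huxxc t ht
    set F : ℝ → ℝ := fun x => (ρ * (ut t x)^2 + μ * (uxx t x)^2)/2 + Φ (u t x) with hF
    have hFc : ContinuousOn F (Icc 0 L) := by
      apply ContinuousOn.add
      · exact ((continuousOn_const.mul (hcut.pow 2)).add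
          (continuousOn_const.mul (hcuxx.pow 2))).div_const 2
      · exact hΦ.continuous.comp_continuousOn hcu
    have hFi : IntervalIntegrable F volume 0 L :=
      ContinuousOn.intervalIntegrable (by rw [huIcc0L]; exact hFc)
    have hE : (∫ x in (0:ℝ)..L, F x) < ε₀ := lt_of_le_of_lt (hdiss t ht) hsmall
    have hui : IntervalIntegrable (fun x => (u t x)^2) volume 0 L :=
      ContinuousOn.intervalIntegrable (by rw [huIcc0L]; exact hcu.pow 2)
    have huxxi : IntervalIntegrable (fun x => (uxx t x)^2) volume 0 L :=
      ContinuousOn.intervalIntegrable (by rw [huIcc0L]; exact hcuxx.pow 2)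
    have h1 : κ * (∫ x in (0:ℝ)..L, (u t x)^2) ≤ ∫ x in (0:ℝ)..L, F x := by
      rw [← intervalIntegral.integral_const_mul]
      apply intervalIntegral.integral_mono_on hL.le (hui.const_mul κ) hFi
      intro x hx
      have hq := hΦ.quad_lower (u t x) (abs_le.mp (hb x hx))
      have h2 : 0 ≤ ρ * (ut t x)^2 := by positivity
      have h3 : 0 ≤ μ * (uxx t x)^2 := by positivity
      simp only [hF]
      linarith
    have h2 : μ/2 * (∫ x in (0:ℝ)..L, (uxx t x)^2) ≤ ∫ x in (0:ℝ)..L, F x := by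
      rw [← intervalIntegral.integral_const_mul]
      apply intervalIntegral.integral_mono_on hL.le (huxxi.const_mul (μ/2)) hFi
      intro x hx
      have h2 : 0 ≤ ρ * (ut t x)^2 := by positivity
      have h3 : 0 ≤ Φ (u t x) := hΦ.nonneg _
      simp only [hF]
      linarith
    have hv2 : (∫ x in (0:ℝ)..L, (u t x)^2) ≤ ε₀/κ := by
      rw [le_div_iff₀ hκ]
      nlinarith
    have hh2 : (∫ x in (0:ℝ)..L, (uxx t x)^2) ≤ 2*ε₀/μ := by
      rw [le_div_iff₀ hμ]
      nlinarith
    have hkey2 := slice_bound L κ μ ε₀ hL hκ hμ hε₀pos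
      (fun x => u t x) (fun x => ux t x) (fun x => uxx t x)
      (fun x hx => huxd t ht x hx) (fun x hx => huxxd t ht x hx) hcuxx hv2 hh2
    intro x hx
    calc |u t x| ≤ C * Real.sqrt ε₀ := hkey2 x hx
      _ = 1/2 := hkey
  -- continuity induction on the connected set [0, ∞)
  haveI : PreconnectedSpace (Ici (0:ℝ)) :=
    isPreconnected_iff_preconnectedSpace.mp isPreconnected_Ici
  set A : Set (Ici (0:ℝ)) := {t | ∀ x ∈ Icc (0:ℝ) L, |u ↑t x| ≤ M} with hA
  have hclosed : IsClosed A := by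
    have heq : A = ⋂ x ∈ Icc (0:ℝ) L, {t : Ici (0:ℝ) | |u ↑t x| ≤ M} := by
      ext t; simp [hA]
    rw [heq]
    refine isClosed_biInter fun x hx => ?_
    have hcont : Continuous fun t : Ici (0:ℝ) => u ↑t x := by
      have heq2 : (fun t : Ici (0:ℝ) => u ↑t x)
          = (fun p : ℝ × ℝ => u p.1 p.2) ∘ (fun t : Ici (0:ℝ) => ((t:ℝ), x)) := rfl
      rw [heq2]
      exact hu.comp_continuous (continuous_subtype_val.prodMk continuous_const)
        (fun t => ⟨t.2, hx⟩)
    exact isClosed_le hcont.abs continuous_const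
  have hopen : IsOpen A := by
    rw [isOpen_iff_mem_nhds]
    intro t₀ ht₀
    obtain ⟨W, hWopen, hWeq⟩ := continuousOn_iff'.mp hu.abs (Iio 1) isOpen_Iio
    have hsub : ({(t₀ : ℝ)} : Set ℝ) ×ˢ Icc (0:ℝ) L ⊆ W := by
      rintro ⟨a, x⟩ ⟨ha, hx⟩
      rw [mem_singleton_iff] at ha
      subst ha
      have hmem : ((t₀ : ℝ), x) ∈
          (fun p : ℝ × ℝ => |u p.1 p.2|) ⁻¹' (Iio 1) ∩ (Ici 0 ×ˢ Icc 0 L) :=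
        ⟨lt_of_le_of_lt (ht₀ x hx) hM1, ⟨t₀.2, hx⟩⟩
      rw [hWeq] at hmem
      exact hmem.1
    obtain ⟨U, V, hUopen, _, hU, hV, hUV⟩ :=
      generalized_tube_lemma isCompact_singleton isCompact_Icc hWopen hsub
    have hnhds : Subtype.val ⁻¹' U ∈ nhds t₀ :=
      (hUopen.preimage continuous_subtype_val).mem_nhds (hU rfl)
    refine Filter.mem_of_superset hnhds ?_
    intro t htU
    have h1 : ∀ x ∈ Icc (0:ℝ) L, |u ↑t x| ≤ 1 := by
      intro x hx
      have hW : ((t : ℝ), x) ∈ W := hUV ⟨htU, hV hx⟩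
      have hmem : ((t : ℝ), x) ∈
          (fun p : ℝ × ℝ => |u p.1 p.2|) ⁻¹' (Iio 1) ∩ (Ici 0 ×ˢ Icc 0 L) := by
        rw [hWeq]
        exact ⟨hW, ⟨t.2, hx⟩⟩
      exact le_of_lt hmem.1
    exact fun x hx => le_trans (step ↑t t.2 h1 x hx) hM12
  have h0 : (⟨0, Set.self_mem_Ici⟩ : Ici (0:ℝ)) ∈ A :=
    fun x hx => (hm x hx).trans (le_max_left _ _)
  have hAuniv : A = univ :=
    (isClopen_iff.mp ⟨hclosed, hopen⟩).resolve_left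
      (Set.nonempty_iff_ne_empty.mp ⟨_, h0⟩)
  refine ⟨M, hM1, ?_⟩
  intro t ht x hx
  have hmemA : (⟨t, ht⟩ : Ici (0:ℝ)) ∈ A := hAuniv ▸ mem_univ _
  exact hmemA x hx
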